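/- Fix reals a, b > 0, k > 0, exponents 1 < q < p, l > p(k+1), and λ > 0. Let A > 0 and F, G ∈ ℝ with F ≤ 0 and G > 0, and define φ : (0,∞) → ℝ by φ(t) = (a/(p(k+1)))·A^{k+1}·t^{p(k+1)} + (b/p)·A·t^p − (λ/q)·F·t^q − (1/l)·G·t^l. Then there exists a unique t₂ > 0 with φ'(t₂) = 0; moreover φ'(t) > 0 for 0 < t < t₂ and φ'(t) < 0 for t > t₂, φ''(t₂) < 0, φ(t₂) = sup_{t>0} φ(t) > 0, and φ(t) → −∞ as t → +∞. -/

import Mathlib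

open Real Filter Set Topology

noncomputable def phi (a b k p q l lam A F G t : ℝ) : ℝ :=
  a / (p * (k + 1)) * A ^ (k + 1) * t ^ (p * (k + 1))
    + b / p * A * t ^ p - lam / q * F * t ^ q - 1 / l * G * t ^ l

lemma phi_hasDerivAt (a b k p q l lam A F G : ℝ)
    (hp : 0 < p) (hk : 0 < k + 1) (hq : 0 < q) (hl : 0 < l) {t : ℝ} (ht : 0 < t) :
    HasDerivAt (phi a b k p q l lam A F G)
      (a * A ^ (k+1) * t ^ (p*(k+1)-1) + b * A * t ^ (p-1)
        - lam * F * t ^ (q-1) - G * t ^ (l-1)) t := by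
  have h1 := (Real.hasDerivAt_rpow_const (p := p*(k+1)) (Or.inl ht.ne')).const_mul
      (a / (p * (k + 1)) * A ^ (k + 1))
  have h2 := (Real.hasDerivAt_rpow_const (p := p) (Or.inl ht.ne')).const_mul (b / p * A)
  have h3 := (Real.hasDerivAt_rpow_const (p := q) (Or.inl ht.ne')).const_mul (lam / q * F)
  have h4 := (Real.hasDerivAt_rpow_const (p := l) (Or.inl ht.ne')).const_mul (1 / l * G)
  have h := ((h1.add h2).sub h3).sub h4
  have hfun : phi a b k p q l lam A F G = fun t : ℝ =>
      a / (p * (k + 1)) * A ^ (k + 1) * t ^ (p * (k + 1))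
        + b / p * A * t ^ p - lam / q * F * t ^ q - 1 / l * G * t ^ l := rfl
  rw [hfun]
  refine h.congr_deriv ?_
  field_simp

theorem stmt_5 (a b k p q l lam A F G : ℝ)
    (ha : 0 < a) (hb : 0 < b) (hk : 0 < k)
    (hq : 1 < q) (hqp : q < p) (hl : p * (k + 1) < l) (hlam : 0 < lam)
    (hA : 0 < A) (hF : F ≤ 0) (hG : 0 < G) :
    ∃ t₂ : ℝ, 0 < t₂ ∧ deriv (phi a b k p q l lam A F G) t₂ = 0 ∧
      (∀ t : ℝ, 0 < t → deriv (phi a b k p q l lam A F G) t = 0 → t = t₂) ∧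
      (∀ t : ℝ, 0 < t → t < t₂ → 0 < deriv (phi a b k p q l lam A F G) t) ∧
      (∀ t : ℝ, t₂ < t → deriv (phi a b k p q l lam A F G) t < 0) ∧
      deriv (deriv (phi a b k p q l lam A F G)) t₂ < 0 ∧
      (∀ t : ℝ, 0 < t →
        phi a b k p q l lam A F G t ≤ phi a b k p q l lam A F G t₂) ∧
      0 < phi a b k p q l lam A F G t₂ ∧
      Filter.Tendsto (phi a b k p q l lam A F G) Filter.atTop Filter.atBot := by
  set φ := phi a b k p q l lam A F G with hφdef
  set α : ℝ := p * (k + 1) with hα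
  have hp1 : 1 < p := hq.trans hqp
  have hp0 : 0 < p := by linarith
  have hq0 : 0 < q := by linarith
  have hk1 : (0:ℝ) < k + 1 := by linarith
  have hpα : p < α := by
    have : p * 1 < p * (k + 1) := by
      apply mul_lt_mul_of_pos_left (by linarith) hp0
    simpa using this
  have hα1 : 1 < α := by linarith
  have hl1 : 1 < l := by linarith
  have hl0 : 0 < l := by linarith
  have hAk : 0 < A ^ (k + 1) := Real.rpow_pos_of_pos hA _
  have hlamF : lam * F ≤ 0 := mul_nonpos_of_nonneg_of_nonpos hlam.le hF
  -- the (rescaled) derivative ψ and the derivative g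
  set g : ℝ → ℝ := fun t =>
    a * A ^ (k+1) * t ^ (α-1) + b * A * t ^ (p-1) - lam * F * t ^ (q-1) - G * t ^ (l-1)
    with hgdef
  set ψ : ℝ → ℝ := fun t =>
    a * A ^ (k+1) * t ^ (α-l) + b * A * t ^ (p-l) - lam * F * t ^ (q-l) - G with hψdef
  have hderiv : ∀ t : ℝ, 0 < t → deriv φ t = g t := fun t ht =>
    (phi_hasDerivAt a b k p q l lam A F G hp0 hk1 hq0 hl0 ht).deriv
  have hgψ : ∀ t : ℝ, 0 < t → g t = t ^ (l-1) * ψ t := by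
    intro t ht
    have e : ∀ x : ℝ, t ^ (l-1) * t ^ (x-l) = t ^ (x-1) := by
      intro x
      rw [← Real.rpow_add ht]; congr 1; ring
    calc g t = a * A ^ (k+1) * t ^ (α-1) + b * A * t ^ (p-1)
            - lam * F * t ^ (q-1) - G * t ^ (l-1) := rfl
      _ = a * A ^ (k+1) * (t ^ (l-1) * t ^ (α-l)) + b * A * (t ^ (l-1) * t ^ (p-l))
            - lam * F * (t ^ (l-1) * t ^ (q-l)) - G * t ^ (l-1) := by rw [e, e, e]
      _ = t ^ (l-1) * ψ t := by simp only [hψdef]; ring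
  -- ψ is strictly decreasing on (0,∞)
  have hanti : ∀ s t : ℝ, 0 < s → s < t → ψ t < ψ s := by
    intro s t hs hst
    have h1 : t ^ (α-l) < s ^ (α-l) :=
      Real.rpow_lt_rpow_of_neg hs hst (by linarith)
    have h2 : t ^ (p-l) < s ^ (p-l) :=
      Real.rpow_lt_rpow_of_neg hs hst (by linarith)
    have h3 : t ^ (q-l) < s ^ (q-l) :=
      Real.rpow_lt_rpow_of_neg hs hst (by linarith)
    have h1' : a * A ^ (k+1) * t ^ (α-l) < a * A ^ (k+1) * s ^ (α-l) :=
      mul_lt_mul_of_pos_left h1 (by positivity)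
    have h2' : b * A * t ^ (p-l) < b * A * s ^ (p-l) :=
      mul_lt_mul_of_pos_left h2 (by positivity)
    have h3' : lam * F * s ^ (q-l) ≤ lam * F * t ^ (q-l) :=
      mul_le_mul_of_nonpos_left h3.le hlamF
    simp only [hψdef]; linarith
  -- ψ is positive for small t
  obtain ⟨s, hs0, hψs⟩ : ∃ s : ℝ, 0 < s ∧ 0 < ψ s := by
    set s0 : ℝ := (G / (b * A)) ^ ((p-l)⁻¹) with hs0def
    have hGba : 0 < G / (b * A) := by positivity
    have hs0pos : 0 < s0 := Real.rpow_pos_of_pos hGba _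
    refine ⟨s0 / 2, by positivity, ?_⟩
    have hs0p : s0 ^ (p-l) = G / (b * A) := by
      rw [hs0def, ← Real.rpow_mul hGba.le, inv_mul_cancel₀ (by linarith : p - l ≠ 0),
        Real.rpow_one]
    have hlt : s0 ^ (p-l) < (s0 / 2) ^ (p-l) :=
      Real.rpow_lt_rpow_of_neg (by positivity) (by linarith) (by linarith)
    have hbig : G < b * A * (s0 / 2) ^ (p-l) := by
      rw [hs0p] at hlt
      have := (div_lt_iff₀ (by positivity : (0:ℝ) < b * A)).mp hlt
      linarith [this]
    have e1 : 0 < a * A ^ (k+1) * (s0/2) ^ (α-l) := by positivity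
    have e3 : lam * F * (s0/2) ^ (q-l) ≤ 0 :=
      mul_nonpos_of_nonpos_of_nonneg hlamF (by positivity)
    simp only [hψdef]; linarith
  -- ψ is eventually negative
  have hψtop : Tendsto ψ atTop (𝓝 (-G)) := by
    have lim : ∀ c : ℝ, c < 0 → Tendsto (fun t : ℝ => t ^ c) atTop (𝓝 0) := by
      intro c hc
      have : c = -(-c) := by ring
      rw [this]
      exact tendsto_rpow_neg_atTop (y := -c) (by linarith)
    have l1 := (lim (α-l) (by linarith)).const_mul (a * A ^ (k+1))
    have l2 := (lim (p-l) (by linarith)).const_mul (b * A)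
    have l3 := (lim (q-l) (by linarith)).const_mul (lam * F)
    have := ((l1.add l2).sub l3).sub (tendsto_const_nhds (x := G) (f := atTop))
    simpa using this
  obtain ⟨T0, hT0⟩ := (hψtop.eventually_lt_const (by linarith : -G < 0)).exists_forall_of_atTop
  set T : ℝ := max T0 (s + 1) with hTdef
  have hsT : s < T := lt_of_lt_of_le (by linarith) (le_max_right _ _)
  have hψT : ψ T < 0 := hT0 T (le_max_left _ _)
  -- continuity of ψ on [s, T]
  have hψcont : ContinuousOn ψ (Icc s T) := by
    intro x hx
    have hx0 : x ≠ 0 := by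
      have := hx.1; intro h; rw [h] at this; linarith
    have cc : ∀ c : ℝ, ContinuousAt (fun t : ℝ => t ^ c) x := fun c =>
      Real.continuousAt_rpow_const x c (Or.inl hx0)
    exact ContinuousAt.continuousWithinAt <|
      (((((continuousAt_const.mul (cc (α-l)))).add
        ((continuousAt_const.mul (cc (p-l))))).sub
        ((continuousAt_const.mul (cc (q-l))))).sub continuousAt_const)
  -- IVT
  obtain ⟨t₂, ht₂mem, ht₂⟩ : ∃ t₂ ∈ Icc s T, ψ t₂ = 0 := by
    have h0 : (0:ℝ) ∈ Icc (ψ T) (ψ s) := ⟨hψT.le, hψs.le⟩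
    obtain ⟨t₂, ht₂mem, ht₂⟩ := intermediate_value_Icc' hsT.le hψcont h0
    exact ⟨t₂, ht₂mem, ht₂⟩
  have ht₂0 : 0 < t₂ := lt_of_lt_of_le hs0 ht₂mem.1
  -- sign facts for ψ
  have hψpos : ∀ t : ℝ, 0 < t → t < t₂ → 0 < ψ t := by
    intro t ht htt; have := hanti t t₂ ht htt; linarith [ht₂ ▸ this]
  have hψneg : ∀ t : ℝ, t₂ < t → ψ t < 0 := by
    intro t htt; have := hanti t₂ t ht₂0 htt; linarith [ht₂ ▸ this]
  -- sign facts for deriv φ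
  have hdpos : ∀ t : ℝ, 0 < t → t < t₂ → 0 < deriv φ t := by
    intro t ht htt
    rw [hderiv t ht, hgψ t ht]
    exact mul_pos (Real.rpow_pos_of_pos ht _) (hψpos t ht htt)
  have hdneg : ∀ t : ℝ, t₂ < t → deriv φ t < 0 := by
    intro t htt
    have ht : 0 < t := ht₂0.trans htt
    rw [hderiv t ht, hgψ t ht]
    exact mul_neg_of_pos_of_neg (Real.rpow_pos_of_pos ht _) (hψneg t htt)
  have hd0 : deriv φ t₂ = 0 := by
    rw [hderiv t₂ ht₂0, hgψ t₂ ht₂0, ht₂, mul_zero]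
  -- uniqueness
  have huniq : ∀ t : ℝ, 0 < t → deriv φ t = 0 → t = t₂ := by
    intro t ht hdt
    rcases lt_trichotomy t t₂ with h | h | h
    · exact absurd hdt (hdpos t ht h).ne'
    · exact h
    · exact absurd hdt (hdneg t h).ne
  -- differentiability / continuity of φ on (0,∞)
  have hdiff : ∀ t : ℝ, 0 < t → DifferentiableAt ℝ φ t := fun t ht =>
    (phi_hasDerivAt a b k p q l lam A F G hp0 hk1 hq0 hl0 ht).differentiableAt
  -- global max at t₂
  have hmax : ∀ t : ℝ, 0 < t → φ t ≤ φ t₂ := by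
    intro t ht
    rcases lt_trichotomy t t₂ with h | h | h
    · have hmono : StrictMonoOn φ (Icc t t₂) := by
        apply strictMonoOn_of_deriv_pos (convex_Icc t t₂)
        · exact fun x hx => ((hdiff x (lt_of_lt_of_le ht hx.1)).continuousAt).continuousWithinAt
        · intro x hx
          rw [interior_Icc] at hx
          exact hdpos x (ht.trans hx.1) hx.2
      exact (hmono ⟨le_refl t, h.le⟩ ⟨h.le, le_refl t₂⟩ h).le
    · rw [h]
    · have hmono : StrictAntiOn φ (Icc t₂ t) := by
        apply strictAntiOn_of_deriv_neg (convex_Icc t₂ t)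
        · exact fun x hx => ((hdiff x (lt_of_lt_of_le ht₂0 hx.1)).continuousAt).continuousWithinAt
        · intro x hx
          rw [interior_Icc] at hx
          exact hdneg x hx.1
      exact (hmono ⟨le_refl t₂, h.le⟩ ⟨h.le, le_refl t⟩ h).le
  -- positivity of φ t₂
  have hφpos : 0 < φ t₂ := by
    set c2 : ℝ := b / p * A with hc2
    set c4 : ℝ := 1 / l * G with hc4
    have hc2p : 0 < c2 := by positivity
    have hc4p : 0 < c4 := by positivity
    set s1 : ℝ := (c2 / c4) ^ ((l - p)⁻¹) with hs1def
    have hs1pos : 0 < s1 := Real.rpow_pos_of_pos (by positivity) _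
    have hs1pow : s1 ^ (l - p) = c2 / c4 := by
      rw [hs1def, ← Real.rpow_mul (by positivity), inv_mul_cancel₀ (by linarith : l - p ≠ 0),
        Real.rpow_one]
    set t₀ : ℝ := min t₂ (s1 / 2) with ht₀def
    have ht₀pos : 0 < t₀ := lt_min ht₂0 (by positivity)
    have ht₀le : t₀ ≤ t₂ := min_le_left _ _
    have ht₀s1 : t₀ < s1 := lt_of_le_of_lt (min_le_right _ _) (by linarith)
    have hpow : t₀ ^ (l - p) < c2 / c4 := by
      rw [← hs1pow]
      exact Real.rpow_lt_rpow ht₀pos.le ht₀s1 (by linarith)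
    have hsplit : t₀ ^ l = t₀ ^ p * t₀ ^ (l - p) := by
      rw [← Real.rpow_add ht₀pos]; congr 1; ring
    have hφt₀ : 0 < φ t₀ := by
      have e1 : 0 < a / α * A ^ (k+1) * t₀ ^ α :=
        mul_pos (mul_pos (div_pos ha (by linarith)) hAk) (Real.rpow_pos_of_pos ht₀pos _)
      have e3 : lam / q * F * t₀ ^ q ≤ 0 :=
        mul_nonpos_of_nonpos_of_nonneg
          (mul_nonpos_of_nonneg_of_nonpos (by positivity) hF) (by positivity)
      have e24 : c4 * t₀ ^ l < c2 * t₀ ^ p := by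
        rw [hsplit]
        have h1 : c4 * t₀ ^ (l - p) < c2 := by
          have := (mul_lt_mul_of_pos_left hpow hc4p)
          rw [mul_div_cancel₀ _ hc4p.ne'] at this
          linarith
        have h2 : 0 < t₀ ^ p := Real.rpow_pos_of_pos ht₀pos _
        calc c4 * (t₀ ^ p * t₀ ^ (l-p)) = (c4 * t₀ ^ (l-p)) * t₀ ^ p := by ring
          _ < c2 * t₀ ^ p := mul_lt_mul_of_pos_right h1 h2
      show 0 < a / (p * (k + 1)) * A ^ (k + 1) * t₀ ^ (p * (k+1))
          + b / p * A * t₀ ^ p - lam / q * F * t₀ ^ q - 1 / l * G * t₀ ^ l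
      rw [← hα, ← hc2, ← hc4]
      linarith [e24]
    linarith [hmax t₀ ht₀pos]
  -- tendsto atBot
  have htop : Tendsto φ atTop atBot := by
    set c4 : ℝ := 1 / l * G with hc4
    have hc4p : 0 < c4 := by positivity
    set h : ℝ → ℝ := fun t =>
      a / (p * (k+1)) * A ^ (k+1) * t ^ (α - l) + b / p * A * t ^ (p - l)
        - lam / q * F * t ^ (q - l) - c4 with hhdef
    have hfac : ∀ t : ℝ, 0 < t → φ t = t ^ l * h t := by
      intro t ht
      have e : ∀ x : ℝ, t ^ l * t ^ (x - l) = t ^ x := by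
        intro x; rw [← Real.rpow_add ht]; congr 1; ring
      show a / (p * (k + 1)) * A ^ (k + 1) * t ^ (p * (k+1))
          + b / p * A * t ^ p - lam / q * F * t ^ q - 1 / l * G * t ^ l = _
      rw [← hα, ← e α, ← e p, ← e q]
      simp only [hhdef, ← hc4]
      ring
    have hhlim : Tendsto h atTop (𝓝 (-c4)) := by
      have lim : ∀ c : ℝ, c < 0 → Tendsto (fun t : ℝ => t ^ c) atTop (𝓝 0) := by
        intro c hc
        have : c = -(-c) := by ring
        rw [this]
        exact tendsto_rpow_neg_atTop (by linarith)
      have l1 := (lim (α-l) (by linarith)).const_mul (a / (p * (k+1)) * A ^ (k+1))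
      have l2 := (lim (p-l) (by linarith)).const_mul (b / p * A)
      have l3 := (lim (q-l) (by linarith)).const_mul (lam / q * F)
      have := ((l1.add l2).sub l3).sub (tendsto_const_nhds (x := c4) (f := atTop))
      simpa using this
    have hev : ∀ᶠ t in atTop, φ t ≤ -(c4/2) * t ^ l := by
      filter_upwards [hhlim.eventually_lt_const (by linarith : -c4 < -(c4/2)),
        eventually_gt_atTop 0] with t hht ht
      rw [hfac t ht]
      have := mul_le_mul_of_nonneg_left hht.le (Real.rpow_pos_of_pos ht l).le
      linarith [this]
    have hbot : Tendsto (fun t : ℝ => -(c4/2) * t ^ l) atTop atBot :=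
      (tendsto_rpow_atTop hl0).const_mul_atTop_of_neg (by linarith : -(c4/2) < 0)
    exact tendsto_atBot_mono' atTop hev hbot
  -- second derivative
  have hsnd : deriv (deriv φ) t₂ < 0 := by
    set g2 : ℝ → ℝ := fun t =>
      a * A ^ (k+1) * ((α-1) * t ^ (α-1-1)) + b * A * ((p-1) * t ^ (p-1-1))
        - lam * F * ((q-1) * t ^ (q-1-1)) - G * ((l-1) * t ^ (l-1-1)) with hg2def
    have hgd : HasDerivAt g (g2 t₂) t₂ := by
      have h1 := (Real.hasDerivAt_rpow_const (p := α-1) (Or.inl ht₂0.ne')).const_mul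
          (a * A ^ (k+1))
      have h2 := (Real.hasDerivAt_rpow_const (p := p-1) (Or.inl ht₂0.ne')).const_mul (b * A)
      have h3 := (Real.hasDerivAt_rpow_const (p := q-1) (Or.inl ht₂0.ne')).const_mul (lam * F)
      have h4 := (Real.hasDerivAt_rpow_const (p := l-1) (Or.inl ht₂0.ne')).const_mul G
      have h := ((h1.add h2).sub h3).sub h4
      exact h
    have hEq : deriv φ =ᶠ[𝓝 t₂] g := by
      filter_upwards [IsOpen.mem_nhds isOpen_Ioi (show t₂ ∈ Ioi (0:ℝ) from ht₂0)] with x hx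
      exact hderiv x hx
    rw [hEq.deriv_eq, hgd.deriv]
    -- show g2 t₂ < 0 using g t₂ = 0
    have hgt₂ : g t₂ = 0 := by rw [hgψ t₂ ht₂0, ht₂, mul_zero]
    set X : ℝ := t₂ ^ (α-1) with hX
    set Y : ℝ := t₂ ^ (p-1) with hY
    set Z : ℝ := t₂ ^ (q-1) with hZ
    set W : ℝ := t₂ ^ (l-1) with hW
    have hXp : 0 < X := Real.rpow_pos_of_pos ht₂0 _
    have hYp : 0 < Y := Real.rpow_pos_of_pos ht₂0 _
    have hZp : 0 < Z := Real.rpow_pos_of_pos ht₂0 _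
    have hrel : a * A ^ (k+1) * X + b * A * Y - lam * F * Z - G * W = 0 := hgt₂
    have esub : ∀ x : ℝ, t₂ ^ (x - 1 - 1) = t₂ ^ (x-1) * t₂⁻¹ := by
      intro x
      rw [show x - 1 - 1 = (x-1) + (-1) by ring, Real.rpow_add ht₂0, Real.rpow_neg_one]
    have hinv : 0 < t₂⁻¹ := by positivity
    have hg2eq : g2 t₂ = t₂⁻¹ * ((α-1) * (a * A ^ (k+1) * X) + (p-1) * (b * A * Y)
        - (q-1) * (lam * F * Z) - (l-1) * (G * W)) := by
      simp only [hg2def, esub, ← hX, ← hY, ← hZ, ← hW]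
      ring
    rw [hg2eq]
    have hGW : G * W = a * A ^ (k+1) * X + b * A * Y - lam * F * Z := by linarith
    rw [hGW]
    have hbra : (α-1) * (a * A ^ (k+1) * X) + (p-1) * (b * A * Y) - (q-1) * (lam * F * Z)
        - (l-1) * (a * A ^ (k+1) * X + b * A * Y - lam * F * Z)
        = (α-l) * (a * A ^ (k+1) * X) + (p-l) * (b * A * Y) + (l-q) * (lam * F * Z) := by
      ring
    rw [hbra]
    have t1 : (α-l) * (a * A ^ (k+1) * X) < 0 :=
      mul_neg_of_neg_of_pos (by linarith) (by positivity)
    have t2 : (p-l) * (b * A * Y) < 0 :=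
      mul_neg_of_neg_of_pos (by linarith) (by positivity)
    have t3 : (l-q) * (lam * F * Z) ≤ 0 :=
      mul_nonpos_of_nonneg_of_nonpos (by linarith)
        (mul_nonpos_of_nonpos_of_nonneg hlamF hZp.le)
    exact mul_neg_of_pos_of_neg hinv (by linarith)
  exact ⟨t₂, ht₂0, hd0, huniq, hdpos, hdneg, hsnd, hmax, hφpos, htop⟩
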